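/- If A : X → 2^X is a monotone linear relation, then dom A ⊆ (A0)^⊥ and A0 ⊆ (dom A)^⊥. -/

import Mathlib

lemma aux_quad_zero (a b : ℝ) (h : ∀ t : ℝ, 0 ≤ t^2 * a - t * b) : b = 0 := by
  by_contra hb
  set s : ℝ := 1 / (|a| + 1) with hs
  have habs : (0:ℝ) < |a| + 1 := by positivity
  have hspos : 0 < s := by positivity
  have hsa : s * |a| < 1 := by
    rw [hs, div_mul_eq_mul_div, div_lt_one habs]; linarith
  have hb2 : 0 < b^2 := by positivity
  have := h (b * s)
  nlinarith [le_abs_self a, mul_pos hb2 hspos, mul_pos (mul_pos hb2 hspos) hspos]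

/-- For a monotone linear relation, dom A ⊆ (A0)^⊥ and A0 ⊆ (dom A)^⊥. -/
theorem monotone_linear_relation_domain_perp
    {X : Type*} [NormedAddCommGroup X] [InnerProductSpace ℝ X] [CompleteSpace X]
    (A : X → Set X)
    (hlin : ∃ G : Submodule ℝ (X × X), ∀ x y, y ∈ A x ↔ (x, y) ∈ G)
    (hmono : ∀ x x' y y', x' ∈ A x → y' ∈ A y → (0:ℝ) ≤ inner ℝ (x - y) (x' - y')) :
    (∀ x, (A x).Nonempty → ∀ c ∈ A 0, (inner ℝ x c : ℝ) = 0) ∧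
    (∀ c ∈ A 0, ∀ x, (A x).Nonempty → (inner ℝ c x : ℝ) = 0) := by
  obtain ⟨G, hG⟩ := hlin
  have key : ∀ x, (A x).Nonempty → ∀ c ∈ A 0, (inner ℝ x c : ℝ) = 0 := by
    intro x ⟨x', hx'⟩ c hc
    apply aux_quad_zero (inner ℝ x x' : ℝ) (inner ℝ x c : ℝ)
    intro t
    have hmem : (t • x') ∈ A (t • x) := by
      rw [hG]
      have : (t • x, t • x') = t • ((x, x') : X × X) := rfl
      rw [this]
      exact G.smul_mem t ((hG x x').mp hx')
    have := hmono (t • x) (t • x') 0 c hmem hc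
    calc (0:ℝ) ≤ inner ℝ (t • x - 0) (t • x' - c) := this
    _ = t^2 * (inner ℝ x x' : ℝ) - t * (inner ℝ x c : ℝ) := by
        rw [sub_zero, inner_sub_right, real_inner_smul_left, real_inner_smul_left,
          real_inner_smul_right]
        ring
  refine ⟨key, fun c hc x hx => ?_⟩
  rw [real_inner_comm]
  exact key x hx c hc
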